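/- The set of finite dimensional tracial states on a unital C*-algebra A is a convex face of the tracial state space T(A): if τ₁, τ₂ ∈ T(A) and 0 < c < 1 are such that cτ₁ + (1−c)τ₂ is finite dimensional, then both τ₁ and τ₂ are finite dimensional; and conversely any convex combination of finite dimensional traces is finite dimensional. -/

import Mathlib

open scoped ComplexOrder

/-- A tracial state on a unital complex `*`-algebra: a unital, positive, tracial
linear functional. -/
def IsTracialState {A : Type*} [Ring A] [StarRing A] [Algebra ℂ A]
    (τ : A →ₗ[ℂ] ℂ) : Prop :=
  τ 1 = 1 ∧ (∀ a, 0 ≤ τ (star a * a)) ∧ (∀ a b, τ (a * b) = τ (b * a))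

/-- A tracial state `τ` is finite dimensional if the quotient of `A` by the ideal
`I_τ = {a | τ (a⋆ a) = 0}` is finite dimensional. -/
def IsFiniteDimensionalTrace {A : Type*} [Ring A] [StarRing A] [Algebra ℂ A]
    (τ : A →ₗ[ℂ] ℂ) : Prop :=
  ∃ S : Submodule ℂ A, (∀ a, a ∈ S ↔ τ (star a * a) = 0) ∧ FiniteDimensional ℂ (A ⧸ S)

/-- The null space of a positive linear functional is a submodule. -/
def traceKernel {A : Type*} [Ring A] [StarRing A] [Algebra ℂ A] [StarModule ℂ A]
    (τ : A →ₗ[ℂ] ℂ) (hpos : ∀ a, 0 ≤ τ (star a * a)) : Submodule ℂ A where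
  carrier := {a | τ (star a * a) = 0}
  zero_mem' := by simp
  add_mem' := by
    intro a b ha hb
    simp only [Set.mem_setOf_eq] at ha hb ⊢
    have key : star (a + b) * (a + b) + star (a - b) * (a - b)
        = (star a * a + star a * a) + (star b * b + star b * b) := by
      simp only [star_add, star_sub]
      noncomm_ring
    have hsum : τ (star (a + b) * (a + b)) + τ (star (a - b) * (a - b)) = 0 := by
      rw [← map_add, key]
      simp [ha, hb]
    exact (add_eq_zero_iff_of_nonneg (hpos _) (hpos _)).mp hsum |>.1
  smul_mem' := by
    intro z a ha
    simp only [Set.mem_setOf_eq] at ha ⊢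
    have key : star (z • a) * (z • a) = (star z * z) • (star a * a) := by
      rw [star_smul, smul_mul_assoc, mul_smul_comm, smul_smul]
    rw [key, map_smul, ha, smul_zero]

lemma traceKernel_mem {A : Type*} [Ring A] [StarRing A] [Algebra ℂ A] [StarModule ℂ A]
    (τ : A →ₗ[ℂ] ℂ) (hpos : ∀ a, 0 ≤ τ (star a * a)) (a : A) :
    a ∈ traceKernel τ hpos ↔ τ (star a * a) = 0 := Iff.rfl

/-- The finite dimensional tracial states form a face of the tracial state space. -/
theorem stmt_0 {A : Type*} [NormedRing A] [StarRing A] [CStarRing A]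
    [NormedAlgebra ℂ A] [CompleteSpace A] [StarModule ℂ A]
    (τ₁ τ₂ : A →ₗ[ℂ] ℂ) (h₁ : IsTracialState τ₁) (h₂ : IsTracialState τ₂)
    (c : ℝ) (hc0 : 0 < c) (hc1 : c < 1) :
    (IsFiniteDimensionalTrace ((c : ℂ) • τ₁ + ((1 - c : ℝ) : ℂ) • τ₂) →
      IsFiniteDimensionalTrace τ₁ ∧ IsFiniteDimensionalTrace τ₂) ∧
    (IsFiniteDimensionalTrace τ₁ → IsFiniteDimensionalTrace τ₂ →
      IsFiniteDimensionalTrace ((c : ℂ) • τ₁ + ((1 - c : ℝ) : ℂ) • τ₂)) := by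
  obtain ⟨-, hpos₁, -⟩ := h₁
  obtain ⟨-, hpos₂, -⟩ := h₂
  have hc0' : (0:ℂ) < (c:ℂ) := by exact_mod_cast hc0
  have hc1' : (0:ℂ) < ((1 - c : ℝ):ℂ) := by
    have : (0:ℝ) < 1 - c := by linarith
    exact_mod_cast this
  set τ := (c : ℂ) • τ₁ + ((1 - c : ℝ) : ℂ) • τ₂ with hτ
  have hτapp : ∀ a : A, τ a = (c:ℂ) * τ₁ a + ((1 - c : ℝ):ℂ) * τ₂ a := by
    intro a; simp [hτ, smul_eq_mul]
  -- τ(star a * a) = 0 iff both traces vanish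
  have hzero : ∀ a : A, τ (star a * a) = 0 ↔
      τ₁ (star a * a) = 0 ∧ τ₂ (star a * a) = 0 := by
    intro a
    rw [hτapp]
    constructor
    · intro h
      have h1 : (0:ℂ) ≤ (c:ℂ) * τ₁ (star a * a) := mul_nonneg hc0'.le (hpos₁ a)
      have h2 : (0:ℂ) ≤ ((1 - c : ℝ):ℂ) * τ₂ (star a * a) :=
        mul_nonneg hc1'.le (hpos₂ a)
      obtain ⟨e1, e2⟩ := (add_eq_zero_iff_of_nonneg h1 h2).mp h
      constructor
      · exact (mul_eq_zero.mp e1).resolve_left hc0'.ne'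
      · exact (mul_eq_zero.mp e2).resolve_left hc1'.ne'
    · rintro ⟨e1, e2⟩; rw [e1, e2]; ring
  have hposτ : ∀ a : A, 0 ≤ τ (star a * a) := by
    intro a
    rw [hτapp]
    exact add_nonneg (mul_nonneg hc0'.le (hpos₁ a)) (mul_nonneg hc1'.le (hpos₂ a))
  constructor
  · -- face direction
    rintro ⟨S, hS, hfin⟩
    have key : ∀ (σ : A →ₗ[ℂ] ℂ) (hposσ : ∀ a, 0 ≤ σ (star a * a))
        (hv : ∀ a, τ (star a * a) = 0 → σ (star a * a) = 0),
        IsFiniteDimensionalTrace σ := by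
      intro σ hposσ hv
      refine ⟨traceKernel σ hposσ, fun a => Iff.rfl, ?_⟩
      have hle : S ≤ traceKernel σ hposσ := fun a ha => hv a ((hS a).mp ha)
      have hsurj : Function.Surjective
          (Submodule.mapQ S (traceKernel σ hposσ) LinearMap.id hle) := by
        intro x
        obtain ⟨a, rfl⟩ := Submodule.Quotient.mk_surjective _ x
        exact ⟨Submodule.Quotient.mk a, rfl⟩
      exact Module.Finite.of_surjective _ hsurj
    exact ⟨key τ₁ hpos₁ (fun a ha => ((hzero a).mp ha).1),
      key τ₂ hpos₂ (fun a ha => ((hzero a).mp ha).2)⟩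
  · -- convexity direction
    rintro ⟨S₁, hS₁, hfin₁⟩ ⟨S₂, hS₂, hfin₂⟩
    refine ⟨S₁ ⊓ S₂, ?_, ?_⟩
    · intro a
      rw [Submodule.mem_inf, hS₁, hS₂, hzero]
    · let f : (A ⧸ (S₁ ⊓ S₂)) →ₗ[ℂ] (A ⧸ S₁) × (A ⧸ S₂) :=
        LinearMap.prod (Submodule.mapQ _ S₁ LinearMap.id inf_le_left)
          (Submodule.mapQ _ S₂ LinearMap.id inf_le_right)
      have hinj : Function.Injective f := by
        rw [← LinearMap.ker_eq_bot]
        ext x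
        simp only [LinearMap.mem_ker, Submodule.mem_bot]
        constructor
        · intro hx
          obtain ⟨a, rfl⟩ := Submodule.Quotient.mk_surjective _ x
          have h1 := congrArg Prod.fst hx
          have h2 := congrArg Prod.snd hx
          simp only [f, LinearMap.prod_apply, Function.prod, Submodule.mapQ_apply,
            LinearMap.id_coe, id_eq, Prod.fst_zero, Prod.snd_zero] at h1 h2
          rw [Submodule.Quotient.mk_eq_zero] at h1 h2 ⊢
          exact ⟨h1, h2⟩
        · rintro rfl; simp
      exact FiniteDimensional.of_injective f hinj
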